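/- arXiv:1610.07172 — 3 statements merged into one kernel-verified Lean document; each statement's English description precedes it below -/
import Mathlib

section
/- Let Ω be a measurable set and u, v : Ω → [0, ∞) be measurable functions with u, v ∈ L¹(Ω) and ∫_Ω u log(u/v) - (u - v) dx well-defined. Then ∫_Ω u log(u/v) - (u - v) dx ≥ (3 / (2‖u‖_{L¹(Ω)} + 4‖v‖_{L¹(Ω)})) · ‖u - v‖²_{L¹(Ω)}. -/
open MeasureTheory Real

private lemma log_add_inv (x : ℝ) (hx : 0 < x) : 0 ≤ Real.log x + 1/x - 1 := by
  have h := Real.log_le_sub_one_of_pos (show (0:ℝ) < x⁻¹ by positivity)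
  rw [Real.log_inv] at h
  have h1 : x⁻¹ = 1/x := (one_div x).symm
  linarith [h, h1 ▸ h]

private lemma k_hasDeriv {x : ℝ} (hx : 0 < x) :
    HasDerivAt (fun y => (y+1)*Real.log y - 2*y + 2) (Real.log x + 1/x - 1) x := by
  have h1 : HasDerivAt (fun y : ℝ => (y+1)) 1 x := (hasDerivAt_id x).add_const 1
  have h3 := h1.mul (Real.hasDerivAt_log hx.ne')
  have h4 := (h3.sub ((hasDerivAt_id x).const_mul 2)).add_const 2
  refine h4.congr_deriv ?_
  field_simp
  ring

private lemma h_hasDeriv {x : ℝ} (hx : 0 < x) :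
    HasDerivAt (fun y => (2*y^2 + 4*y)*Real.log y - 5*y^2 + 4*y + 1)
      (4 * ((x+1)*Real.log x - 2*x + 2)) x := by
  have h1 : HasDerivAt (fun y : ℝ => 2*y^2 + 4*y) (4*x + 4) x := by
    have := ((hasDerivAt_pow 2 x).const_mul 2).add ((hasDerivAt_id x).const_mul 4)
    refine this.congr_deriv ?_
    ring
  have h2 := h1.mul (Real.hasDerivAt_log hx.ne')
  have h3 := ((h2.sub ((hasDerivAt_pow 2 x).const_mul 5)).add ((hasDerivAt_id x).const_mul 4)).add_const 1
  refine h3.congr_deriv ?_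
  field_simp
  ring

private lemma k_mono : MonotoneOn (fun y => (y+1)*Real.log y - 2*y + 2) (Set.Ioi (0:ℝ)) := by
  apply monotoneOn_of_deriv_nonneg (convex_Ioi 0)
  · intro x hx
    exact (k_hasDeriv hx).continuousAt.continuousWithinAt
  · intro x hx
    rw [interior_Ioi] at hx
    exact (k_hasDeriv hx).differentiableAt.differentiableWithinAt
  · intro x hx
    rw [interior_Ioi] at hx
    rw [(k_hasDeriv hx).deriv]
    exact log_add_inv x hx

private lemma k_one : ((1:ℝ)+1)*Real.log 1 - 2*1 + 2 = 0 := by simp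

private lemma keyt {t : ℝ} (ht : 0 < t) :
    5*t^2 - 4*t - 1 ≤ (2*t^2 + 4*t) * Real.log t := by
  have hh1 : ((2:ℝ)*1^2 + 4*1)*Real.log 1 - 5*1^2 + 4*1 + 1 = 0 := by
    norm_num
  rcases le_total 1 t with h1t | ht1
  · -- t ≥ 1 : h monotone on Ici 1
    have hmono : MonotoneOn (fun y => (2*y^2 + 4*y)*Real.log y - 5*y^2 + 4*y + 1) (Set.Ici (1:ℝ)) := by
      apply monotoneOn_of_deriv_nonneg (convex_Ici 1)
      · intro x hx
        have hx0 : (0:ℝ) < x := lt_of_lt_of_le one_pos hx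
        exact (h_hasDeriv hx0).continuousAt.continuousWithinAt
      · intro x hx
        rw [interior_Ici] at hx
        have hx0 : (0:ℝ) < x := lt_trans one_pos hx
        exact (h_hasDeriv hx0).differentiableAt.differentiableWithinAt
      · intro x hx
        rw [interior_Ici] at hx
        have hx0 : (0:ℝ) < x := lt_trans one_pos hx
        rw [(h_hasDeriv hx0).deriv]
        have hk : (0:ℝ) ≤ (x+1)*Real.log x - 2*x + 2 := by
          simpa using k_mono (Set.mem_Ioi.mpr one_pos) (Set.mem_Ioi.mpr hx0) hx.le
        linarith
    have := hmono (Set.self_mem_Ici) (Set.mem_Ici.mpr h1t) h1t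
    simp only [hh1] at this
    linarith [this]
  · -- t ≤ 1 : h antitone on Ioc 0 1
    have hanti : AntitoneOn (fun y => (2*y^2 + 4*y)*Real.log y - 5*y^2 + 4*y + 1) (Set.Ioc (0:ℝ) 1) := by
      apply antitoneOn_of_deriv_nonpos (convex_Ioc 0 1)
      · intro x hx
        exact (h_hasDeriv hx.1).continuousAt.continuousWithinAt
      · intro x hx
        rw [interior_Ioc] at hx
        exact (h_hasDeriv hx.1).differentiableAt.differentiableWithinAt
      · intro x hx
        rw [interior_Ioc] at hx
        rw [(h_hasDeriv hx.1).deriv]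
        have hk : (x+1)*Real.log x - 2*x + 2 ≤ 0 := by
          simpa using k_mono (Set.mem_Ioi.mpr hx.1) (Set.mem_Ioi.mpr one_pos) hx.2.le
        linarith
    have := hanti (Set.mem_Ioc.mpr ⟨ht, ht1⟩) (Set.mem_Ioc.mpr ⟨one_pos, le_refl 1⟩) ht1
    simp only [hh1] at this
    linarith [this]

private lemma pt (a b : ℝ) (ha : 0 ≤ a) (hb : 0 ≤ b) (hab : 0 < a → 0 < b) :
    3 * ((a-b)^2 / (2*a + 4*b)) ≤ a * Real.log (a/b) - (a - b) := by
  rcases ha.eq_or_lt with h0 | hapos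
  · rcases hb.eq_or_lt with hb0 | hbpos
    · rw [← h0, ← hb0]; norm_num
    · rw [← h0]
      have e : ((0:ℝ)-b)^2/(2*0+4*b) = b/4 := by
        field_simp
        ring
      rw [e]
      simp only [zero_mul, zero_sub, sub_neg_eq_add, zero_add]
      linarith
  · have hbpos := hab hapos
    have key := keyt (t := a/b) (show (0:ℝ) < a/b by positivity)
    have key2 := mul_le_mul_of_nonneg_right key (sq_nonneg b)
    have e1 : (5*(a/b)^2 - 4*(a/b) - 1)*b^2 = 5*a^2 - 4*a*b - b^2 := by
      field_simp
    have e2 : ((2*(a/b)^2 + 4*(a/b)) * Real.log (a/b))*b^2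
        = (2*a^2 + 4*a*b) * Real.log (a/b) := by
      field_simp
    rw [e1, e2] at key2
    rw [show 3 * ((a-b)^2 / (2*a + 4*b)) = 3*(a-b)^2 / (2*a+4*b) by ring,
      div_le_iff₀ (show (0:ℝ) < 2*a+4*b by linarith)]
    nlinarith [key2]


/-- Csiszár–Kullback–Pinsker inequality in the form of Lemma 3.1. The hypothesis
`hpos` (v > 0 a.e. where u > 0) together with integrability of the entropy integrand
encodes that ∫ u log(u/v) - (u - v) is well defined (not +∞). -/
theorem stmt_6 {α : Type*} [MeasurableSpace α] (μ : Measure α)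
    (u v : α → ℝ) (hu0 : ∀ x, 0 ≤ u x) (hv0 : ∀ x, 0 ≤ v x)
    (hu : Integrable u μ) (hv : Integrable v μ)
    (hpos : ∀ᵐ x ∂μ, 0 < u x → 0 < v x)
    (hint : Integrable (fun x => u x * Real.log (u x / v x) - (u x - v x)) μ) :
    (∫ x, (u x * Real.log (u x / v x) - (u x - v x)) ∂μ) ≥
      3 / (2 * (∫ x, u x ∂μ) + 4 * (∫ x, v x ∂μ)) * (∫ x, |u x - v x| ∂μ) ^ 2 := by
  set Q : α → ℝ := fun x => (u x - v x)^2 / (2 * u x + 4 * v x) with hQdef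
  have hQ0 : ∀ x, 0 ≤ Q x := fun x =>
    div_nonneg (sq_nonneg _) (by linarith [hu0 x, hv0 x])
  -- a.e. pointwise bound
  have hae : ∀ᵐ x ∂μ, 3 * Q x ≤ u x * Real.log (u x / v x) - (u x - v x) := by
    filter_upwards [hpos] with x hx
    exact pt (u x) (v x) (hu0 x) (hv0 x) hx
  -- measurability and integrability of Q
  have huae := hu.aestronglyMeasurable.aemeasurable
  have hvae := hv.aestronglyMeasurable.aemeasurable
  have hd := huae.sub hvae
  have hQmeas : AEMeasurable Q μ := by
    have h1 : AEMeasurable (fun x => (u x - v x)^2) μ := by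
      exact (hd.mul hd).congr (Filter.Eventually.of_forall fun x => by simp [pow_two])
    exact h1.div ((huae.const_mul 2).add (hvae.const_mul 4))
  have hQint : Integrable Q μ := by
    apply Integrable.mono' hint hQmeas.aestronglyMeasurable
    filter_upwards [hae] with x hx
    rw [Real.norm_eq_abs, abs_of_nonneg (hQ0 x)]
    linarith [hQ0 x]
  set A := ∫ x, Q x ∂μ with hAdef
  have hA0 : 0 ≤ A := integral_nonneg hQ0
  have hEnt : 3 * A ≤ ∫ x, (u x * Real.log (u x / v x) - (u x - v x)) ∂μ := by
    rw [hAdef, ← integral_const_mul _ _]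
    exact integral_mono_ae (hQint.const_mul 3) hint hae
  set S := 2 * (∫ x, u x ∂μ) + 4 * (∫ x, v x ∂μ) with hSdef
  set I := ∫ x, |u x - v x| ∂μ with hIdef
  have hI0 : 0 ≤ I := integral_nonneg fun x => abs_nonneg _
  have hS0 : 0 ≤ S := by
    have h1 : 0 ≤ ∫ x, u x ∂μ := integral_nonneg hu0
    have h2 : 0 ≤ ∫ x, v x ∂μ := integral_nonneg hv0
    rw [hSdef]; linarith
  rw [ge_iff_le]
  rcases hS0.eq_or_lt with hSz | hSpos
  · rw [← hSz]
    simp only [div_zero, zero_mul]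
    linarith
  rcases hI0.eq_or_lt with hIz | hIpos
  · rw [← hIz]
    simp only [ne_eq, OfNat.ofNat_ne_zero, not_false_eq_true, zero_pow, mul_zero]
    linarith
  -- Cauchy-Schwarz step: I^2 ≤ A * S
  set c := I / S with hcdef
  have hcpos : 0 < c := div_pos hIpos hSpos
  have hs : Integrable (fun x => 2 * u x + 4 * v x) μ := (hu.const_mul 2).add (hv.const_mul 4)
  have hSint : (∫ x, (2 * u x + 4 * v x) ∂μ) = S := by
    rw [integral_add (hu.const_mul 2) (hv.const_mul 4), integral_const_mul _ _, integral_const_mul _ _,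
      hSdef]
  have hpt : ∀ x, |u x - v x| ≤ c/2 * (2 * u x + 4 * v x) + Q x / (2 * c) := by
    intro x
    rcases (show (0:ℝ) ≤ 2 * u x + 4 * v x by linarith [hu0 x, hv0 x]).eq_or_lt with hz | hp
    · have hux : u x = 0 := by linarith [hu0 x, hv0 x]
      have hvx : v x = 0 := by linarith [hu0 x, hv0 x]
      simp [hQdef, hux, hvx]
    · rw [hQdef]
      have h1 : (u x - v x)^2 / (2 * u x + 4 * v x) / (2 * c)
          = (u x - v x)^2 / ((2 * u x + 4 * v x) * (2 * c)) := div_div _ _ _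
      rw [h1, ← sub_le_iff_le_add', le_div_iff₀ (by positivity)]
      nlinarith [sq_nonneg (c * (2 * u x + 4 * v x) - |u x - v x|), sq_abs (u x - v x),
        abs_nonneg (u x - v x)]
  have hw : Integrable (fun x => |u x - v x|) μ := (hu.sub hv).abs
  have hrhsint : Integrable (fun x => c/2 * (2 * u x + 4 * v x) + Q x / (2 * c)) μ :=
    (hs.const_mul (c/2)).add (hQint.div_const (2*c))
  have hIle : I ≤ c/2 * S + A / (2 * c) := by
    calc I ≤ ∫ x, (c/2 * (2 * u x + 4 * v x) + Q x / (2 * c)) ∂μ :=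
          integral_mono hw hrhsint hpt
      _ = c/2 * S + A / (2 * c) := by
          rw [integral_add (hs.const_mul (c/2)) (hQint.div_const (2*c)),
            integral_const_mul _ _, integral_div, hSint, hAdef]
  have e1 : c/2 * S = I/2 := by
    rw [hcdef]
    field_simp
  have e2 : A / (2 * c) = A * S / (2 * I) := by
    rw [hcdef, show 2 * (I/S) = 2*I/S by ring, div_div_eq_mul_div]
  rw [e1, e2] at hIle
  have h3 : I/2 ≤ A * S / (2 * I) := by linarith
  rw [le_div_iff₀ (by positivity)] at h3
  have hkey : I^2 ≤ A * S := by nlinarith [h3]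

  have hfin : 3 / S * I^2 ≤ 3 * A := by
    have h4 : 3 / S * I^2 ≤ 3 / S * (A * S) :=
      mul_le_mul_of_nonneg_left hkey (by positivity)
    have h5 : 3 / S * (A * S) = 3 * A := by
      field_simp
    linarith [h4, h5 ▸ h4]
  linarith
end

section
/- Let k₊, k₋, k_{p+}, k_{p-}, M₁, M₂ > 0. Then there exists a unique quadruple (n_S, n_E, n_C, n_P) of strictly positive real numbers satisfying n_E + n_C = M₁, n_S + n_C + n_P = M₂, k₋ n_C = k₊ n_S n_E, and k_{p+} n_C = k_{p-} n_P n_E. Moreover n_C = ((M + K) - √((M + K)² - 4M₁M₂))/2 with M = M₁ + M₂ and K = k₋/k₊ + k_{p+}/k_{p-}, and n_E = M₁ - n_C, n_S = k₋ n_C/(k₊ n_E), n_P = k_{p+} n_C/(k_{p-} n_E). -/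
theorem stmt_8 (kp km kpp kpm M₁ M₂ : ℝ) (hkp : 0 < kp) (hkm : 0 < km)
    (hkpp : 0 < kpp) (hkpm : 0 < kpm) (hM₁ : 0 < M₁) (hM₂ : 0 < M₂) :
    let M := M₁ + M₂
    let K := km / kp + kpp / kpm
    let nC := ((M + K) - Real.sqrt ((M + K) ^ 2 - 4 * M₁ * M₂)) / 2
    let nE := M₁ - nC
    let nS := km * nC / (kp * nE)
    let nP := kpp * nC / (kpm * nE)
    (0 < nS ∧ 0 < nE ∧ 0 < nC ∧ 0 < nP ∧
      nE + nC = M₁ ∧ nS + nC + nP = M₂ ∧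
      km * nC = kp * nS * nE ∧ kpp * nC = kpm * nP * nE) ∧
    ∀ s e c p : ℝ, 0 < s → 0 < e → 0 < c → 0 < p →
      e + c = M₁ → s + c + p = M₂ →
      km * c = kp * s * e → kpp * c = kpm * p * e →
      s = nS ∧ e = nE ∧ c = nC ∧ p = nP := by
  intro M K nC nE nS nP
  have hM : M = M₁ + M₂ := rfl
  have hK : K = km / kp + kpp / kpm := rfl
  have hnC : nC = ((M + K) - Real.sqrt ((M + K) ^ 2 - 4 * M₁ * M₂)) / 2 := rfl
  have hnE : nE = M₁ - nC := rfl
  have hnS : nS = km * nC / (kp * nE) := rfl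
  have hnP : nP = kpp * nC / (kpm * nE) := rfl
  clear_value M K nC nE nS nP
  set D := (M + K) ^ 2 - 4 * M₁ * M₂ with hD
  have hKpos : 0 < K := by rw [hK]; positivity
  have hMK : 0 < M + K := by rw [hM]; linarith
  have hDpos : 0 < D := by
    rw [hD, hM]
    nlinarith [sq_nonneg (M₂ - M₁ + K), mul_pos hM₁ hKpos]
  set S := Real.sqrt D with hS
  have hSpos : 0 < S := Real.sqrt_pos.mpr hDpos
  have hS2 : S ^ 2 = D := Real.sq_sqrt hDpos.le
  have hS2' : S ^ 2 = (M + K) ^ 2 - 4 * M₁ * M₂ := by rw [hS2]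
  have habs : |M₂ - M₁ + K| < S := by
    rw [← Real.sqrt_sq_eq_abs]
    exact Real.sqrt_lt_sqrt (sq_nonneg _)
      (by rw [hD, hM]; nlinarith [mul_pos hM₁ hKpos])
  have habs1 : M₂ - M₁ + K < S := lt_of_le_of_lt (le_abs_self _) habs
  have habs2 : M₁ - M₂ - K < S := by
    have := neg_abs_le (M₂ - M₁ + K)
    linarith
  have hSlt : S < M + K := by
    have h1 : M + K = Real.sqrt ((M + K) ^ 2) := (Real.sqrt_sq hMK.le).symm
    rw [hS, h1]
    exact Real.sqrt_lt_sqrt hDpos.le (by rw [hD]; nlinarith [mul_pos hM₁ hM₂])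
  have hnCpos : 0 < nC := by rw [hnC]; linarith
  have hnCM₁ : nC < M₁ := by rw [hnC, hM]; linarith
  have hnEpos : 0 < nE := by rw [hnE]; linarith
  have hquad : nC ^ 2 - (M + K) * nC + M₁ * M₂ = 0 := by
    linear_combination (1/4) * hS2' + (nC - (M + K)/2 - S/2) * hnC
  have hKmul : kp * kpm * K = km * kpm + kpp * kp := by
    rw [hK]; field_simp
  have hquadP : kp * kpm * nC ^ 2 - (kp * kpm * (M₁ + M₂) + km * kpm + kpp * kp) * nC
      + kp * kpm * (M₁ * M₂) = 0 := by
    linear_combination (kp * kpm) * hquad + nC * hKmul + (kp * kpm * nC) * hM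
  have hne1 : kp * nE ≠ 0 := by positivity
  have hne2 : kpm * nE ≠ 0 := by positivity
  constructor
  · refine ⟨?_, hnEpos, hnCpos, ?_, ?_, ?_, ?_, ?_⟩
    · rw [hnS]; exact div_pos (mul_pos hkm hnCpos) (mul_pos hkp hnEpos)
    · rw [hnP]; exact div_pos (mul_pos hkpp hnCpos) (mul_pos hkpm hnEpos)
    · rw [hnE]; ring
    · have hs' : kp * nE * nS = km * nC := by rw [hnS]; field_simp
      have hp' : kpm * nE * nP = kpp * nC := by rw [hnP]; field_simp
      have hne3 : kp * kpm * nE ≠ 0 := by positivity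
      apply mul_left_cancel₀ hne3
      linear_combination kpm * hs' + kp * hp' - hquadP + kp * kpm * (nC - M₂) * hnE
    · rw [hnS]; field_simp
    · rw [hnP]; field_simp
  · intro s e c p hs he hc hp h1 h2 h3 h4
    have hec : e = M₁ - c := by linarith
    subst hec
    have hcM₁ : c < M₁ := by linarith
    have hquadc : kp * kpm * c ^ 2 - (kp * kpm * (M₁ + M₂) + km * kpm + kpp * kp) * c
        + kp * kpm * (M₁ * M₂) = 0 := by
      linear_combination (-kpm) * h3 - kp * h4 - (kp * kpm * (M₁ - c)) * h2
    have hfac : (c - nC) * (kp * kpm * (c + nC - (M₁ + M₂)) - (km * kpm + kpp * kp)) = 0 := by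
      linear_combination hquadc - hquadP
    rcases mul_eq_zero.mp hfac with hcn | hbad
    · have hc' : c = nC := by linarith [sub_eq_zero.mp hcn]
      have hd : kp * (M₁ - c) ≠ 0 := by positivity
      have hd2 : kpm * (M₁ - c) ≠ 0 := by positivity
      refine ⟨?_, ?_, hc', ?_⟩
      · rw [hnS, hnE, ← hc', eq_div_iff hd]
        linear_combination -h3
      · rw [hnE, hc']
      · rw [hnP, hnE, ← hc', eq_div_iff hd2]
        linear_combination -h4
    · exfalso
      have h5 : kp * kpm * (c + nC) = kp * kpm * (M₁ + M₂ + K) := by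
        linear_combination hbad - hKmul
      have h6 : c + nC = M₁ + M₂ + K :=
        mul_left_cancel₀ (ne_of_gt (mul_pos hkp hkpm)) h5
      rw [hnC] at h6
      rw [hM] at h6
      linarith
end

section
/- Let Ω ⊂ ℝ^d be measurable with |Ω| = 1 and u, v : Ω → [0, ∞) integrable with √u, √v ∈ H¹(Ω). Then (√(∫u) - √(∫v))² ≤ (∫√u - ∫√v)² + (1/P(Ω)) (‖∇√u‖²_{L²} + ‖∇√v‖²_{L²}) + ‖√v - ∫√v‖²_{L²}, where P(Ω) is the Poincaré constant (first nonzero Neumann eigenvalue of -Δ on Ω). -/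
open MeasureTheory Real

lemma stmt_19_int_sqrt {d : ℕ} (Ω : Set (EuclideanSpace ℝ (Fin d)))
    (hvol : volume Ω = 1) (u : EuclideanSpace ℝ (Fin d) → ℝ)
    (hu : IntegrableOn u Ω) : IntegrableOn (fun x => Real.sqrt (u x)) Ω := by
  have hmeas : AEStronglyMeasurable (fun x => Real.sqrt (u x)) (volume.restrict Ω) :=
    Real.continuous_sqrt.comp_aestronglyMeasurable hu.aestronglyMeasurable
  have hfin : volume Ω < ⊤ := by rw [hvol]; exact ENNReal.one_lt_top
  have hconst : IntegrableOn (fun _ : EuclideanSpace ℝ (Fin d) => (1:ℝ)) Ω := by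
    exact integrableOn_const hfin.ne
  refine Integrable.mono' (hconst.add hu.abs) hmeas (ae_of_all _ fun x => ?_)
  have h1 : |Real.sqrt (u x)| = Real.sqrt (u x) := abs_of_nonneg (Real.sqrt_nonneg _)
  rw [Real.norm_eq_abs, h1]
  have h2 : Real.sqrt (u x) ≤ Real.sqrt |u x| := Real.sqrt_le_sqrt (le_abs_self _)
  have h3 : Real.sqrt |u x| ≤ 1 + |u x| := by
    nlinarith [Real.sq_sqrt (abs_nonneg (u x)), Real.sqrt_nonneg |u x|, abs_nonneg (u x)]
  simp only [Pi.add_apply]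
  linarith

lemma stmt_19_decomp {d : ℕ} (Ω : Set (EuclideanSpace ℝ (Fin d))) (hΩ : MeasurableSet Ω)
    (hvol : volume Ω = 1) (u : EuclideanSpace ℝ (Fin d) → ℝ)
    (hu : IntegrableOn u Ω) (hu0 : ∀ x ∈ Ω, 0 ≤ u x) :
    IntegrableOn (fun x => (Real.sqrt (u x) - ∫ y in Ω, Real.sqrt (u y)) ^ 2) Ω ∧
    ∫ x in Ω, u x = (∫ x in Ω, Real.sqrt (u x)) ^ 2 +
      ∫ x in Ω, (Real.sqrt (u x) - ∫ y in Ω, Real.sqrt (u y)) ^ 2 := by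
  set f : EuclideanSpace ℝ (Fin d) → ℝ := fun x => Real.sqrt (u x) with hf_def
  set a : ℝ := ∫ y in Ω, f y with ha_def
  have hf : IntegrableOn f Ω := stmt_19_int_sqrt Ω hvol u hu
  have hfin : volume Ω < ⊤ := by rw [hvol]; exact ENNReal.one_lt_top
  have hf2 : IntegrableOn (fun x => f x ^ 2) Ω := by
    refine hu.congr ?_
    filter_upwards [ae_restrict_mem hΩ] with x hx
    exact (Real.sq_sqrt (hu0 x hx)).symm
  have hconst : IntegrableOn (fun _ : EuclideanSpace ℝ (Fin d) => a ^ 2) Ω := by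
    exact integrableOn_const hfin.ne
  have hexp : (fun x => (f x - a) ^ 2) =
      fun x => (f x ^ 2 - (2 * a) * f x) + a ^ 2 := by
    funext x; ring
  have hfluct : IntegrableOn (fun x => (f x - a) ^ 2) Ω := by
    rw [hexp]
    exact (hf2.sub (hf.const_mul (2 * a))).add hconst
  refine ⟨hfluct, ?_⟩
  have hsub : IntegrableOn (fun x => f x ^ 2 - (2 * a) * f x) Ω :=
    hf2.sub (hf.const_mul (2 * a))
  have hint : ∫ x in Ω, (f x - a) ^ 2 =
      (∫ x in Ω, f x ^ 2) - (2 * a) * a + a ^ 2 := by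
    rw [hexp, integral_add hsub hconst,
      integral_sub hf2 (hf.const_mul (2 * a)), MeasureTheory.integral_const_mul, setIntegral_const]
    rw [measureReal_def, hvol]
    simp [← ha_def]
  have hfu : ∫ x in Ω, u x = ∫ x in Ω, f x ^ 2 := by
    refine setIntegral_congr_fun hΩ fun x hx => ?_
    exact (Real.sq_sqrt (hu0 x hx)).symm
  rw [hfu, hint]; ring

lemma stmt_19_alg (a b s t : ℝ) (ha : 0 ≤ a) (hb : 0 ≤ b) (hs : 0 ≤ s) (ht : 0 ≤ t) :
    (Real.sqrt (a ^ 2 + s) - Real.sqrt (b ^ 2 + t)) ^ 2 ≤ (a - b) ^ 2 + s + t := by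
  have hA : (0:ℝ) ≤ a ^ 2 + s := by positivity
  have hB : (0:ℝ) ≤ b ^ 2 + t := by positivity
  have hab : a * b ≤ Real.sqrt (a ^ 2 + s) * Real.sqrt (b ^ 2 + t) := by
    rw [← Real.sqrt_mul hA]
    have : a * b = Real.sqrt ((a * b) ^ 2) := by
      rw [Real.sqrt_sq (mul_nonneg ha hb)]
    rw [this]
    apply Real.sqrt_le_sqrt
    nlinarith
  nlinarith [Real.sq_sqrt hA, Real.sq_sqrt hB]

/-- Lemma 3.4 combined with the Poincaré–Wirtinger inequality. `P` plays the role of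
the Poincaré constant of `Ω` (first nonzero Neumann eigenvalue of `-Δ`), encoded via
the hypothesis `hPW` that the Poincaré–Wirtinger inequality holds with constant `P`. -/
theorem stmt_19 {d : ℕ} (Ω : Set (EuclideanSpace ℝ (Fin d))) (hΩ : MeasurableSet Ω)
    (hvol : volume Ω = 1) (u v : EuclideanSpace ℝ (Fin d) → ℝ)
    (hu : IntegrableOn u Ω) (hv : IntegrableOn v Ω)
    (hu0 : ∀ x ∈ Ω, 0 ≤ u x) (hv0 : ∀ x ∈ Ω, 0 ≤ v x)
    (hsqu : IntegrableOn (fun x => ‖fderiv ℝ (fun y => Real.sqrt (u y)) x‖ ^ 2) Ω)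
    (hsqv : IntegrableOn (fun x => ‖fderiv ℝ (fun y => Real.sqrt (v y)) x‖ ^ 2) Ω)
    (hdu : ∀ x ∈ Ω, DifferentiableAt ℝ (fun y => Real.sqrt (u y)) x)
    (hdv : ∀ x ∈ Ω, DifferentiableAt ℝ (fun y => Real.sqrt (v y)) x)
    (P : ℝ) (hP : 0 < P)
    (hPW : ∀ w : EuclideanSpace ℝ (Fin d) → ℝ, IntegrableOn w Ω →
      IntegrableOn (fun x => (w x - ∫ y in Ω, w y) ^ 2) Ω →
      IntegrableOn (fun x => ‖fderiv ℝ w x‖ ^ 2) Ω →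
      (∀ x ∈ Ω, DifferentiableAt ℝ w x) →
      P * ∫ x in Ω, (w x - ∫ y in Ω, w y) ^ 2 ≤ ∫ x in Ω, ‖fderiv ℝ w x‖ ^ 2) :
    (Real.sqrt (∫ x in Ω, u x) - Real.sqrt (∫ x in Ω, v x)) ^ 2 ≤
      ((∫ x in Ω, Real.sqrt (u x)) - ∫ x in Ω, Real.sqrt (v x)) ^ 2 +
      (1 / P) * ((∫ x in Ω, ‖fderiv ℝ (fun y => Real.sqrt (u y)) x‖ ^ 2) +
        ∫ x in Ω, ‖fderiv ℝ (fun y => Real.sqrt (v y)) x‖ ^ 2) +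
      ∫ x in Ω, (Real.sqrt (v x) - ∫ y in Ω, Real.sqrt (v y)) ^ 2 := by
  obtain ⟨hfluctu, hdecu⟩ := stmt_19_decomp Ω hΩ hvol u hu hu0
  obtain ⟨hfluctv, hdecv⟩ := stmt_19_decomp Ω hΩ hvol v hv hv0
  set a : ℝ := ∫ x in Ω, Real.sqrt (u x)
  set b : ℝ := ∫ x in Ω, Real.sqrt (v x)
  set s : ℝ := ∫ x in Ω, (Real.sqrt (u x) - a) ^ 2 with hs_def
  set t : ℝ := ∫ x in Ω, (Real.sqrt (v x) - b) ^ 2 with ht_def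
  set Gu : ℝ := ∫ x in Ω, ‖fderiv ℝ (fun y => Real.sqrt (u y)) x‖ ^ 2
  set Gv : ℝ := ∫ x in Ω, ‖fderiv ℝ (fun y => Real.sqrt (v y)) x‖ ^ 2
  have ha : 0 ≤ a := setIntegral_nonneg hΩ fun x _ => Real.sqrt_nonneg _
  have hb : 0 ≤ b := setIntegral_nonneg hΩ fun x _ => Real.sqrt_nonneg _
  have hs : 0 ≤ s := setIntegral_nonneg hΩ fun x _ => sq_nonneg _
  have ht : 0 ≤ t := setIntegral_nonneg hΩ fun x _ => sq_nonneg _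
  have hGv : 0 ≤ Gv := setIntegral_nonneg hΩ fun x _ => sq_nonneg _
  have hPWu := hPW (fun y => Real.sqrt (u y))
    (stmt_19_int_sqrt Ω hvol u hu) hfluctu hsqu hdu
  have hsGu : s ≤ (1 / P) * Gu := by
    rw [div_mul_eq_mul_div, le_div_iff₀ hP]
    linarith [hPWu]
  have key : (Real.sqrt (∫ x in Ω, u x) - Real.sqrt (∫ x in Ω, v x)) ^ 2 ≤
      (a - b) ^ 2 + s + t := by
    rw [hdecu, hdecv]
    exact stmt_19_alg a b s t ha hb hs ht
  have h1P : 0 ≤ (1 / P) * Gv := mul_nonneg (by positivity) hGv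
  calc (Real.sqrt (∫ x in Ω, u x) - Real.sqrt (∫ x in Ω, v x)) ^ 2
      ≤ (a - b) ^ 2 + s + t := key
    _ ≤ (a - b) ^ 2 + (1 / P) * (Gu + Gv) + t := by
        have : (1 / P) * (Gu + Gv) = (1 / P) * Gu + (1 / P) * Gv := by ring
        linarith
end
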